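/- Let C be an (X,s)-neighbour-transitive code in H(m,q) with minimum distance δ. Then for every codeword α ∈ C and every integer i with 1 ≤ i ≤ min{s, ⌊(δ−1)/2⌋}, the stabiliser X_α of α in X fixes setwise the sphere Γ_i(α) = {β ∈ V : d(α,β) = i} and acts transitively on it; in particular, the permutations of M induced by elements of X_α act transitively on the i-element subsets of M (X_α acts i-homogeneously on M). -/
import Mathlib


open Equiv

namespace Paper

/-- A Hamming-graph automorphism of `Fin m → Q` given by entrywise permutations `h`
and a permutation `σ` of the entries. -/
def IsQAutPair {m : ℕ} {Q : Type*} (g : Perm (Fin m → Q)) (h : Fin m → Perm Q)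
    (σ : Perm (Fin m)) : Prop :=
  ∀ α i, g α i = h i (α (σ.symm i))

/-- `g` is an automorphism of the Hamming graph `H(m,q)`. -/
def IsQAut {m : ℕ} {Q : Type*} (g : Perm (Fin m → Q)) : Prop :=
  ∃ h σ, IsQAutPair g h σ

/-- The permutation group `X_i^{Q_i}` induced on the alphabet in entry `i`
by the stabiliser in `X` of the entry `i`. -/
def indQ {m : ℕ} {Q : Type*} (X : Set (Perm (Fin m → Q))) (i : Fin m) : Set (Perm Q) :=
  {π | ∃ g ∈ X, ∃ h σ, IsQAutPair g h σ ∧ σ i = i ∧ h i = π}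

/-- `C_s`, the set of vertices at Hamming distance exactly `s` from the code `C`. -/
def distSet {m : ℕ} {Q : Type*} [DecidableEq Q] (C : Set (Fin m → Q)) (s : ℕ) :
    Set (Fin m → Q) :=
  {v | (∃ c ∈ C, hammingDist v c = s) ∧ ∀ c ∈ C, s ≤ hammingDist v c}

/-- `C` is `(X,s)`-neighbour-transitive: `X` acts transitively on each of
`C = C_0, C_1, …, C_s`. -/
def NbrTrans {m : ℕ} {Q : Type*} [DecidableEq Q] (X : Set (Perm (Fin m → Q)))
    (C : Set (Fin m → Q)) (s : ℕ) : Prop :=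
  ∀ j ≤ s, ∀ u ∈ distSet C j, ∀ v ∈ distSet C j, ∃ g ∈ X, g u = v

/-- `δ` is the minimum distance of the code `C`. -/
def IsMinDist {m : ℕ} {Q : Type*} [DecidableEq Q] (C : Set (Fin m → Q)) (δ : ℕ) : Prop :=
  (∃ u ∈ C, ∃ v ∈ C, u ≠ v ∧ hammingDist u v = δ) ∧
  ∀ u ∈ C, ∀ v ∈ C, u ≠ v → δ ≤ hammingDist u v


lemma qaut_dist {m : ℕ} {Q : Type*} [DecidableEq Q] {g : Perm (Fin m → Q)}
    {h : Fin m → Perm Q} {σ : Perm (Fin m)} (hg : IsQAutPair g h σ) (u v : Fin m → Q) :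
    hammingDist (g u) (g v) = hammingDist u v := by
  have hg' : ∀ a j, g a j = h j (a (σ.symm j)) := hg
  unfold hammingDist
  rw [show (Finset.univ.filter fun j => g u j ≠ g v j)
      = (Finset.univ.filter fun j => u j ≠ v j).map σ.toEmbedding from ?_, Finset.card_map]
  ext j
  simp only [Finset.mem_filter, Finset.mem_map, Finset.mem_univ, true_and, hg',
    Equiv.coe_toEmbedding, ne_eq, EmbeddingLike.apply_eq_iff_eq]
  constructor
  · intro hj
    exact ⟨σ.symm j, hj, σ.apply_symm_apply j⟩
  · rintro ⟨a, ha, rfl⟩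
    simpa using ha

theorem stmt16 (m q s δ : ℕ) (Q : Type) [Fintype Q] [DecidableEq Q]
    (hq : Fintype.card Q = q)
    (C : Set (Fin m → Q)) (X : Subgroup (Perm (Fin m → Q)))
    (hXaut : ∀ g ∈ X, IsQAut g)
    (hXC : ∀ g ∈ X, g '' C = C)
    (hNT : NbrTrans (X : Set (Perm (Fin m → Q))) C s)
    (hδ : IsMinDist C δ) :
    ∀ α ∈ C, ∀ i : ℕ, 1 ≤ i → i ≤ min s ((δ - 1) / 2) →
      -- `X_α` fixes the sphere `Γ_i(α)` setwise
      (∀ g ∈ X, g α = α → ∀ β, hammingDist α β = i → hammingDist α (g β) = i) ∧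
      -- `X_α` acts transitively on `Γ_i(α)`
      (∀ β γ : Fin m → Q, hammingDist α β = i → hammingDist α γ = i →
        ∃ g ∈ X, g α = α ∧ g β = γ) ∧
      -- `X_α` acts `i`-homogeneously on `M`
      (∀ S1 S2 : Finset (Fin m), S1.card = i → S2.card = i →
        ∃ g ∈ X, g α = α ∧ ∃ h σ, IsQAutPair g h σ ∧ S1.image (fun x => σ x) = S2) := by
  intro α hα i hi1 hi2
  obtain ⟨⟨u, hu, v, hv, huv, hd⟩, hmin⟩ := hδ
  have hδ1 : 1 ≤ δ := by
    rcases Nat.eq_zero_or_pos δ with h0 | h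
    · exact absurd (hammingDist_eq_zero.mp (h0 ▸ hd)) huv
    · exact h
  have his : i ≤ s := (le_min_iff.mp hi2).1
  have h2i : 2 * i + 1 ≤ δ := by
    have h1 : i ≤ (δ - 1) / 2 := (le_min_iff.mp hi2).2
    have h2 : i * 2 ≤ δ - 1 := (Nat.le_div_iff_mul_le (by norm_num)).mp h1
    omega
  -- every vertex at distance i from α is in distSet C i
  have hsphere : ∀ β, hammingDist α β = i → β ∈ distSet C i := by
    intro β hβ
    refine ⟨⟨α, hα, by rwa [hammingDist_comm]⟩, ?_⟩
    intro c hc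
    by_cases hcα : c = α
    · subst hcα; rw [hammingDist_comm] at hβ; omega
    · have h1 := hmin α hα c hc (fun e => hcα e.symm)
      have h2 : hammingDist α c ≤ hammingDist α β + hammingDist β c :=
        hammingDist_triangle α β c
      omega
  -- part 1
  have part1 : ∀ g ∈ X, g α = α → ∀ β, hammingDist α β = i →
      hammingDist α (g β) = i := by
    intro g hgX hgα β hβ
    obtain ⟨h, σ, hg⟩ := hXaut g hgX
    have := qaut_dist hg α β
    rwa [hgα, hβ] at this
  -- part 2
  have part2 : ∀ β γ : Fin m → Q, hammingDist α β = i → hammingDist α γ = i →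
      ∃ g ∈ X, g α = α ∧ g β = γ := by
    intro β γ hβ hγ
    obtain ⟨g, hgX, hgβ⟩ := hNT i his β (hsphere β hβ) γ (hsphere γ hγ)
    have hgαC : g α ∈ C := (hXC g hgX) ▸ ⟨α, hα, rfl⟩
    have hgα : g α = α := by
      by_contra hne
      have h1 := hmin (g α) hgαC α hα hne
      obtain ⟨h, σ, hg⟩ := hXaut g hgX
      have h2 : hammingDist (g α) γ = i := by
        rw [← hgβ, qaut_dist hg]; exact hβ
      have h3 : hammingDist (g α) α ≤ hammingDist (g α) γ + hammingDist γ α := by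
        exact hammingDist_triangle _ _ _
      rw [hammingDist_comm γ α] at h3
      omega
    exact ⟨g, hgX, hgα, hgβ⟩
  refine ⟨part1, part2, ?_⟩
  -- part 3
  intro S1 S2 hS1 hS2
  -- Q has two distinct elements
  obtain ⟨j0, hj0⟩ := Function.ne_iff.mp huv
  set other : Q → Q := fun a => if a = u j0 then v j0 else u j0 with hother
  have hother_ne : ∀ a, other a ≠ a := by
    intro a
    by_cases h : a = u j0
    · simp only [hother, h, if_pos rfl]
      exact fun e => hj0 e.symm
    · simp only [hother, if_neg h]
      exact fun e => h e.symm
  set β : Fin m → Q := fun j => if j ∈ S1 then other (α j) else α j with hβdef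
  set γ : Fin m → Q := fun j => if j ∈ S2 then other (α j) else α j with hγdef
  have hmemβ : ∀ j, α j ≠ β j ↔ j ∈ S1 := by
    intro j
    by_cases h : j ∈ S1 <;> simp [hβdef, h]
    exact fun e => hother_ne (α j) e.symm
  have hmemγ : ∀ j, α j ≠ γ j ↔ j ∈ S2 := by
    intro j
    by_cases h : j ∈ S2 <;> simp [hγdef, h]
    exact fun e => hother_ne (α j) e.symm
  have hdβ : hammingDist α β = i := by
    rw [← hS1]
    unfold hammingDist
    congr 1
    ext j
    simp [hmemβ j]
  have hdγ : hammingDist α γ = i := by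
    rw [← hS2]
    unfold hammingDist
    congr 1
    ext j
    simp [hmemγ j]
  obtain ⟨g, hgX, hgα, hgβ⟩ := part2 β γ hdβ hdγ
  obtain ⟨h, σ, hg⟩ := hXaut g hgX
  have hg' : ∀ a j, g a j = h j (a (σ.symm j)) := hg
  refine ⟨g, hgX, hgα, h, σ, hg, ?_⟩
  ext j
  rw [Finset.mem_image]
  constructor
  · rintro ⟨a, ha, rfl⟩
    apply (hmemγ (σ a)).mp
    intro e
    rw [← hgα, ← hgβ, hg', hg'] at e
    simp only [Equiv.symm_apply_apply] at e
    exact (hmemβ a).mpr ha ((h (σ a)).injective e)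
  · intro hj
    refine ⟨σ.symm j, ?_, σ.apply_symm_apply j⟩
    rw [← hmemβ]
    intro e
    have e2 : (g α) j = (g β) j := by rw [hg', hg', e]
    rw [hgα, hgβ] at e2
    exact (hmemγ j).mpr hj e2


end Paper
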